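/- Let H be a real inner product space, A a nonempty set, and φ : A → H a feature map with ‖φ(x)‖ ≤ 1 for all x ∈ A. Fix w, w' ∈ H, define f(x) = ⟨w, φ(x)⟩ and f'(x) = ⟨w', φ(x)⟩, set β = ‖w − w'‖, and fix a noise level σ > 0. Let x₁, …, x_T ∈ A be a sequence such that: for each t ≥ 0, letting K_t be the t×t Gram matrix with entries ⟨φ(x_i), φ(x_j)⟩ (i,j ≤ t), k_t(x) = (⟨φ(x_i), φ(x)⟩)_{i≤t}, y_t = (f(x_i))_{i≤t}, y'_t = (f'(x_i))_{i≤t}, μ_t(x) = k_t(x)ᵀ (K_t + σ²I)⁻¹ (y_t − y'_t) + f'(x), and s_t(x)² = ‖φ(x)‖² − k_t(x)ᵀ (K_t + σ²I)⁻¹ k_t(x) (with μ₀ = f' and s₀(x) = ‖φ(x)‖), the point x_{t+1} maximizes μ_t(x) + β √(s_t(x)²) over x ∈ A. If x* maximizes f over A, then the cumulative regret satisfies Σ_{t=1}^T (f(x*) − f(x_t)) ≤ β · √( (8 / log(1 + σ⁻²)) · T · γ_T ), where γ_T = ½ log det(I + σ⁻² K_T) for the Gram matrix K_T of the selected points φ(x₁),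 …, φ(x_T). -/

import Mathlib

open scoped RealInnerProductSpace Matrix

/-- The Gram matrix of a finite family of vectors in a real inner product space. -/
noncomputable def gram {H : Type*} [NormedAddCommGroup H] [InnerProductSpace ℝ H]
    {T : ℕ} (v : Fin T → H) : Matrix (Fin T) (Fin T) ℝ :=
  Matrix.of fun i j => ⟪v i, v j⟫

/-- The vector of inner products of a point `x` with the family `v`. -/
noncomputable def kvec {H : Type*} [NormedAddCommGroup H] [InnerProductSpace ℝ H]
    {T : ℕ} (v : Fin T → H) (x : H) : Fin T → ℝ :=
  fun i => ⟪v i, x⟫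

/-- The Gaussian-process posterior mean at `x`, with prior mean `⟪w', ·⟫`, observations of
`⟪w, ·⟫` at the points `v`, and observation-noise variance `σ²`:
`μ(x) = k(x)ᵀ (K + σ²I)⁻¹ (y - y') + ⟪w', x⟫`. -/
noncomputable def postMean {H : Type*} [NormedAddCommGroup H] [InnerProductSpace ℝ H]
    {T : ℕ} (σ : ℝ) (v : Fin T → H) (w w' : H) (x : H) : ℝ :=
  kvec v x ⬝ᵥ ((gram v + σ ^ 2 • (1 : Matrix (Fin T) (Fin T) ℝ))⁻¹ *ᵥ
      fun i => ⟪w, v i⟫ - ⟪w', v i⟫)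
    + ⟪w', x⟫

/-- The noise-regularized posterior variance
`s(x)² = ‖x‖² - k(x)ᵀ (K + σ²I)⁻¹ k(x)` of a point `x` given observations at `v`. -/
noncomputable def postVarSq {H : Type*} [NormedAddCommGroup H] [InnerProductSpace ℝ H]
    {T : ℕ} (σ : ℝ) (v : Fin T → H) (x : H) : ℝ :=
  ‖x‖ ^ 2 - kvec v x ⬝ᵥ ((gram v + σ ^ 2 • (1 : Matrix (Fin T) (Fin T) ℝ))⁻¹ *ᵥ kvec v x)


section PBOAux
variable {H : Type*} [NormedAddCommGroup H] [InnerProductSpace ℝ H]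

lemma dot_gram {T : ℕ} (v : Fin T → H) (z : Fin T → ℝ) :
    z ⬝ᵥ (gram v *ᵥ z) = ‖∑ i, z i • v i‖ ^ 2 := by
  rw [← real_inner_self_eq_norm_sq, sum_inner]
  simp only [dotProduct, Matrix.mulVec, gram, Matrix.of_apply, dotProduct,
    inner_sum, real_inner_smul_left, real_inner_smul_right, Finset.mul_sum]
  refine Finset.sum_congr rfl fun i _ => Finset.sum_congr rfl fun j _ => by ring

lemma M_posDef {T : ℕ} {σ : ℝ} (hσ : 0 < σ) (v : Fin T → H) :
    (gram v + σ ^ 2 • (1 : Matrix (Fin T) (Fin T) ℝ)).PosDef := by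
  rw [Matrix.posDef_iff_dotProduct_mulVec]
  constructor
  · unfold Matrix.IsHermitian
    ext i j
    simp [gram, Matrix.one_apply, real_inner_comm, Matrix.conjTranspose_apply]
    rcases eq_or_ne i j with h | h
    · simp [h, real_inner_comm]
    · simp [h, Ne.symm h, real_inner_comm]
  · intro z hz
    have : star z = z := rfl
    rw [this, Matrix.add_mulVec, dotProduct_add, dot_gram]
    have h1 : z ⬝ᵥ ((σ ^ 2 • (1 : Matrix (Fin T) (Fin T) ℝ)) *ᵥ z) = σ ^ 2 * (z ⬝ᵥ z) := by
      simp [Matrix.smul_mulVec, Matrix.one_mulVec, dotProduct_smul, smul_eq_mul]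
    rw [h1]
    have h2 : 0 < z ⬝ᵥ z := by
      have := Matrix.dotProduct_self_star_pos_iff (v := z)
      simpa using this.mpr hz
    positivity

lemma M_inv_transpose {T : ℕ} {σ : ℝ} (hσ : 0 < σ) (v : Fin T → H) :
    (gram v + σ ^ 2 • (1 : Matrix (Fin T) (Fin T) ℝ))⁻¹ᵀ
      = (gram v + σ ^ 2 • (1 : Matrix (Fin T) (Fin T) ℝ))⁻¹ := by
  have h := ((M_posDef hσ v).inv).1
  ext i j
  simpa using congrFun (congrFun h i) j

lemma M_mulVec_inv {T : ℕ} {σ : ℝ} (hσ : 0 < σ) (v : Fin T → H) (k : Fin T → ℝ) :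
    (gram v + σ ^ 2 • (1 : Matrix (Fin T) (Fin T) ℝ)) *ᵥ
      ((gram v + σ ^ 2 • (1 : Matrix (Fin T) (Fin T) ℝ))⁻¹ *ᵥ k) = k := by
  rw [Matrix.mulVec_mulVec, Matrix.mul_nonsing_inv _ (M_posDef hσ v).det_pos.ne'.isUnit]
  · simp

lemma varSq_eq {T : ℕ} {σ : ℝ} (hσ : 0 < σ) (v : Fin T → H) (x : H) :
    postVarSq σ v x
      = ‖x - ∑ i, ((gram v + σ ^ 2 • (1 : Matrix (Fin T) (Fin T) ℝ))⁻¹ *ᵥ kvec v x) i • v i‖ ^ 2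
        + σ ^ 2 * (((gram v + σ ^ 2 • (1 : Matrix (Fin T) (Fin T) ℝ))⁻¹ *ᵥ kvec v x) ⬝ᵥ
            ((gram v + σ ^ 2 • (1 : Matrix (Fin T) (Fin T) ℝ))⁻¹ *ᵥ kvec v x)) := by
  set M : Matrix (Fin T) (Fin T) ℝ := gram v + σ ^ 2 • 1 with hM
  set k := kvec v x with hk
  set α := M⁻¹ *ᵥ k with hα
  have hMα : M *ᵥ α = k := M_mulVec_inv hσ v k
  have hgα : gram v *ᵥ α = k - σ ^ 2 • α := by
    have : gram v *ᵥ α + (σ ^ 2 • (1 : Matrix (Fin T) (Fin T) ℝ)) *ᵥ α = k := by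
      rw [← Matrix.add_mulVec, ← hM, hMα]
    have h1 : (σ ^ 2 • (1 : Matrix (Fin T) (Fin T) ℝ)) *ᵥ α = σ ^ 2 • α := by
      simp [Matrix.smul_mulVec]
    rw [h1] at this
    rw [← this]; abel
  have hnorm : ‖x - ∑ i, α i • v i‖ ^ 2
      = ‖x‖ ^ 2 - 2 * (α ⬝ᵥ k) + α ⬝ᵥ (gram v *ᵥ α) := by
    rw [dot_gram, @norm_sub_sq_real]
    congr 2
    rw [inner_sum]
    simp only [dotProduct, real_inner_smul_right, hk, kvec]
    rw [Finset.mul_sum, Finset.mul_sum]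
    exact Finset.sum_congr rfl fun i _ => by rw [real_inner_comm]
  have hga : α ⬝ᵥ (gram v *ᵥ α) = α ⬝ᵥ k - σ ^ 2 * (α ⬝ᵥ α) := by
    rw [hgα, dotProduct_sub, dotProduct_smul, smul_eq_mul]
  have hdc : k ⬝ᵥ α = α ⬝ᵥ k := dotProduct_comm _ _
  unfold postVarSq
  rw [← hk, ← hα, hdc, hnorm, hga]
  ring

lemma varSq_nonneg {T : ℕ} {σ : ℝ} (hσ : 0 < σ) (v : Fin T → H) (x : H) :
    0 ≤ postVarSq σ v x := by
  rw [varSq_eq hσ]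
  have := dotProduct_self_star_nonneg
    ((gram v + σ ^ 2 • (1 : Matrix (Fin T) (Fin T) ℝ))⁻¹ *ᵥ kvec v x)
  simp only [star_trivial] at this
  positivity

lemma conf_bound {T : ℕ} {σ : ℝ} (hσ : 0 < σ) (v : Fin T → H) (w w' x : H) :
    |⟪w, x⟫ - postMean σ v w w' x| ≤ ‖w - w'‖ * Real.sqrt (postVarSq σ v x) := by
  set M : Matrix (Fin T) (Fin T) ℝ := gram v + σ ^ 2 • 1 with hM
  set k := kvec v x with hk
  set α := M⁻¹ *ᵥ k with hα
  have hy : (fun i => ⟪w, v i⟫ - ⟪w', v i⟫) = fun i => ⟪w - w', v i⟫ := by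
    funext i; rw [inner_sub_left]
  have hswap : k ⬝ᵥ (M⁻¹ *ᵥ fun i => ⟪w - w', v i⟫) = α ⬝ᵥ (fun i => ⟪w - w', v i⟫) := by
    rw [Matrix.dotProduct_mulVec, ← Matrix.mulVec_transpose, M_inv_transpose hσ, ← hα]
  have key : ⟪w, x⟫ - postMean σ v w w' x = ⟪w - w', x - ∑ i, α i • v i⟫ := by
    rw [postMean, hy, ← hk, hswap, inner_sub_right, inner_sub_left, inner_sum]
    simp only [dotProduct, real_inner_smul_right]
    ring
  rw [key]
  calc |⟪w - w', x - ∑ i, α i • v i⟫| ≤ ‖w - w'‖ * ‖x - ∑ i, α i • v i‖ :=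
        abs_real_inner_le_norm _ _
    _ ≤ ‖w - w'‖ * Real.sqrt (postVarSq σ v x) := by
        apply mul_le_mul_of_nonneg_left _ (norm_nonneg _)
        have h1 : ‖x - ∑ i, α i • v i‖ ^ 2 ≤ postVarSq σ v x := by
          rw [varSq_eq hσ]
          have := dotProduct_self_star_nonneg α
          simp only [star_trivial] at this
          rw [← hk, ← hα]
          nlinarith
        calc ‖x - ∑ i, α i • v i‖ = Real.sqrt (‖x - ∑ i, α i • v i‖ ^ 2) := by
              rw [Real.sqrt_sq (norm_nonneg _)]
          _ ≤ Real.sqrt (postVarSq σ v x) := Real.sqrt_le_sqrt h1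

lemma gram_snoc {t : ℕ} (v : Fin t → H) (u : H) :
    (gram (Fin.snoc v u : Fin (t+1) → H)).submatrix finSumFinEquiv finSumFinEquiv
      = Matrix.fromBlocks (gram v)
          (Matrix.of fun i (_ : Fin 1) => kvec v u i)
          (Matrix.of fun (_ : Fin 1) j => kvec v u j)
          (Matrix.of fun _ _ => ‖u‖ ^ 2) := by
  have hlast : ∀ j : Fin 1, (finSumFinEquiv (Sum.inr j) : Fin (t+1)) = Fin.last t := by
    intro j
    fin_cases j
    simp [finSumFinEquiv, Fin.natAdd, Fin.last]
  have hcast : ∀ i : Fin t, (finSumFinEquiv (Sum.inl i) : Fin (t+1)) = Fin.castSucc i := by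
    intro i; rfl
  ext (i | i) (j | j) <;>
    simp [Matrix.submatrix_apply, hlast, hcast, gram, kvec, Fin.snoc_castSucc, Fin.snoc_last,
      real_inner_comm, real_inner_self_eq_norm_sq]

set_option linter.unnecessarySeqFocus false in
set_option linter.unusedTactic false in
lemma det_M_snoc {t : ℕ} {σ : ℝ} (hσ : 0 < σ) (v : Fin t → H) (u : H) :
    (gram (Fin.snoc v u : Fin (t+1) → H)
        + σ ^ 2 • (1 : Matrix (Fin (t+1)) (Fin (t+1)) ℝ)).det
      = (gram v + σ ^ 2 • (1 : Matrix (Fin t) (Fin t) ℝ)).det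
        * (σ ^ 2 + postVarSq σ v u) := by
  set A : Matrix (Fin t) (Fin t) ℝ := gram v + σ ^ 2 • 1 with hA
  set B : Matrix (Fin t) (Fin 1) ℝ := Matrix.of fun i _ => kvec v u i with hB
  set C : Matrix (Fin 1) (Fin t) ℝ := Matrix.of fun _ j => kvec v u j with hC
  set M' := gram (Fin.snoc v u : Fin (t+1) → H)
      + σ ^ 2 • (1 : Matrix (Fin (t+1)) (Fin (t+1)) ℝ) with hM'
  have hsub : M'.submatrix finSumFinEquiv finSumFinEquiv
      = Matrix.fromBlocks A B C (Matrix.of fun _ _ => ‖u‖ ^ 2 + σ ^ 2) := by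
    have h0 : M'.submatrix ⇑finSumFinEquiv ⇑finSumFinEquiv
        = (gram (Fin.snoc v u : Fin (t+1) → H)).submatrix finSumFinEquiv finSumFinEquiv
          + σ ^ 2 • (1 : Matrix (Fin (t+1)) (Fin (t+1)) ℝ).submatrix finSumFinEquiv
              finSumFinEquiv := rfl
    rw [h0, Matrix.submatrix_one_equiv, gram_snoc]
    rw [show (1 : Matrix (Fin t ⊕ Fin 1) (Fin t ⊕ Fin 1) ℝ)
        = Matrix.fromBlocks 1 0 0 1 from (Matrix.fromBlocks_one).symm]
    rw [Matrix.fromBlocks_smul, Matrix.fromBlocks_add]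
    have hD : (Matrix.of fun (_ : Fin 1) (_ : Fin 1) => ‖u‖ ^ 2) + σ ^ 2 • 1
        = Matrix.of fun _ _ => ‖u‖ ^ 2 + σ ^ 2 := by
      ext i j
      fin_cases i; fin_cases j
      simp [Matrix.one_apply]
    rw [hD]
    congr 1 <;> simp [hB, hC]
  have hdet : M'.det = (Matrix.fromBlocks A B C (Matrix.of fun _ _ => ‖u‖ ^ 2 + σ ^ 2)).det := by
    rw [← hsub, Matrix.det_submatrix_equiv_self]
  haveI : Invertible A := A.invertibleOfIsUnitDet (M_posDef hσ v).det_pos.ne'.isUnit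
  rw [hdet, Matrix.det_fromBlocks₁₁]
  congr 1
  rw [Matrix.det_fin_one]
  have hentry : (C * A⁻¹ * B) 0 0 = kvec v u ⬝ᵥ (A⁻¹ *ᵥ kvec v u) := by
    rw [Matrix.mul_assoc, Matrix.mul_apply]
    simp only [Matrix.mul_apply, dotProduct, Matrix.mulVec, hB, hC, Matrix.of_apply,
      dotProduct]
  rw [Matrix.invOf_eq_nonsing_inv] at *
  simp only [Matrix.sub_apply, hentry, Matrix.of_apply]
  rw [postVarSq, ← hA]
  ring

set_option linter.unusedSectionVars false in
lemma snoc_seq {T : ℕ} (u : ℕ → H) :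
    (fun i : Fin (T+1) => u i.1) = Fin.snoc (fun i : Fin T => u i.1) (u T) := by
  funext i
  refine Fin.lastCases ?_ (fun j => ?_) i
  · simp [Fin.snoc_last, Fin.val_last]
  · simp [Fin.snoc_castSucc]

lemma det_M_prod {σ : ℝ} (hσ : 0 < σ) (u : ℕ → H) (T : ℕ) :
    (gram (fun i : Fin T => u i.1) + σ ^ 2 • (1 : Matrix (Fin T) (Fin T) ℝ)).det
      = ∏ t ∈ Finset.range T, (σ ^ 2 + postVarSq σ (fun i : Fin t => u i.1) (u t)) := by
  induction T with
  | zero => simp [Matrix.det_isEmpty]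
  | succ T ih =>
      rw [snoc_seq u, det_M_snoc hσ, ih, Finset.prod_range_succ]

lemma varSq_le {T : ℕ} {σ : ℝ} (hσ : 0 < σ) (v : Fin T → H) (x : H) (hx : ‖x‖ ≤ 1) :
    postVarSq σ v x ≤ 1 := by
  have hpsd := ((M_posDef hσ v).inv).posSemidef
  have h := (Matrix.posSemidef_iff_dotProduct_mulVec.mp hpsd).2 (kvec v x)
  simp only [star_trivial, RCLike.re_to_real] at h
  have h2 : ‖x‖ ^ 2 ≤ 1 := by nlinarith [norm_nonneg x]
  unfold postVarSq
  nlinarith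

lemma log_ineq {a u : ℝ} (ha : 0 < a) (hu0 : 0 ≤ u) (hu1 : u ≤ 1) :
    u * Real.log (1 + a) ≤ Real.log (1 + a * u) := by
  have hcc := strictConcaveOn_log_Ioi.concaveOn
  have h := hcc.2 (Set.mem_Ioi.mpr one_pos) (Set.mem_Ioi.mpr (by linarith : (0:ℝ) < 1 + a))
    (by linarith : (0:ℝ) ≤ 1 - u) hu0 (by ring)
  have he : (1 - u) • (1:ℝ) + u • (1 + a) = 1 + a * u := by simp [smul_eq_mul]; ring
  rw [he] at h
  simpa [Real.log_one, smul_eq_mul] using h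

end PBOAux

/-- **Regret bound for Prior-guided Bayesian Optimization (Theorem 1).**
The objective is `f = ⟪w, φ ·⟫`, the function prior is `f' = ⟪w', φ ·⟫`, and at each round
`t < T` the point `x_{t+1}` maximizes the UCB acquisition `μ_t + β √(s_t²)` built from the
Gaussian process with prior mean `f'` and noise level `σ`, where `β = ‖w - w'‖`. If `x*`
maximizes `f` over `A`, then the cumulative regret is bounded by
`β √((8 / log(1 + σ⁻²)) T γ_T)` with `γ_T = ½ log det(I + σ⁻² K_T)`. -/
theorem pbo_regret_bound {H : Type*} [NormedAddCommGroup H] [InnerProductSpace ℝ H]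
    {A : Type*} [Nonempty A]
    (φ : A → H) (hφ : ∀ a, ‖φ a‖ ≤ 1)
    (w w' : H) (σ : ℝ) (hσ : 0 < σ) (T : ℕ) (x : ℕ → A)
    (hmax : ∀ t < T, ∀ a : A,
      postMean σ (fun i : Fin t => φ (x (i.1 + 1))) w w' (φ a)
          + ‖w - w'‖ * Real.sqrt (postVarSq σ (fun i : Fin t => φ (x (i.1 + 1))) (φ a))
        ≤ postMean σ (fun i : Fin t => φ (x (i.1 + 1))) w w' (φ (x (t + 1)))
          + ‖w - w'‖ *
              Real.sqrt (postVarSq σ (fun i : Fin t => φ (x (i.1 + 1))) (φ (x (t + 1)))))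
    (xstar : A) (hxstar : ∀ a : A, ⟪w, φ a⟫ ≤ ⟪w, φ xstar⟫) :
    ∑ t ∈ Finset.range T, (⟪w, φ xstar⟫ - ⟪w, φ (x (t + 1))⟫)
      ≤ ‖w - w'‖ * Real.sqrt ((8 / Real.log (1 + (σ ^ 2)⁻¹)) * T *
          (1 / 2 * Real.log ((1 : Matrix (Fin T) (Fin T) ℝ)
              + (σ ^ 2)⁻¹ • gram (fun i : Fin T => φ (x (i.1 + 1)))).det)) := by
  have hβ0 : (0:ℝ) ≤ ‖w - w'‖ := norm_nonneg _
  have hσ2 : (0:ℝ) < (σ ^ 2)⁻¹ := by positivity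
  have hL0 : 0 < Real.log (1 + (σ ^ 2)⁻¹) := Real.log_pos (by linarith)
  -- abbreviations
  set s2 : ℕ → ℝ := fun t => postVarSq σ (fun i : Fin t => φ (x (i.1 + 1))) (φ (x (t + 1)))
    with hs2def
  have hs2nn : ∀ t, 0 ≤ s2 t := fun t => varSq_nonneg hσ _ _
  have hs2le : ∀ t, s2 t ≤ 1 := fun t => varSq_le hσ _ _ (hφ _)
  -- per-step regret bound
  have key : ∀ t, t < T → ⟪w, φ xstar⟫ - ⟪w, φ (x (t + 1))⟫
      ≤ 2 * ‖w - w'‖ * Real.sqrt (s2 t) := by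
    intro t ht
    have h1 := (abs_le.mp (conf_bound hσ (fun i : Fin t => φ (x (i.1 + 1))) w w' (φ xstar))).2
    have h2 := (abs_le.mp (conf_bound hσ (fun i : Fin t => φ (x (i.1 + 1))) w w'
      (φ (x (t + 1))))).1
    have h3 := hmax t ht xstar
    have hs : Real.sqrt (postVarSq σ (fun i : Fin t => φ (x (i.1 + 1))) (φ (x (t + 1))))
        = Real.sqrt (s2 t) := rfl
    rw [hs] at h2 h3
    linarith
  -- determinant = product of (1 + σ⁻² s²)
  have hprod : ((1 : Matrix (Fin T) (Fin T) ℝ)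
        + (σ ^ 2)⁻¹ • gram (fun i : Fin T => φ (x (i.1 + 1)))).det
      = ∏ t ∈ Finset.range T, (1 + (σ ^ 2)⁻¹ * s2 t) := by
    have hmat : (1 : Matrix (Fin T) (Fin T) ℝ)
        + (σ ^ 2)⁻¹ • gram (fun i : Fin T => φ (x (i.1 + 1)))
        = (σ ^ 2)⁻¹ • (gram (fun i : Fin T => φ (x (i.1 + 1)))
            + σ ^ 2 • (1 : Matrix (Fin T) (Fin T) ℝ)) := by
      rw [smul_add, smul_smul, inv_mul_cancel₀ (by positivity : (σ^2:ℝ) ≠ 0), one_smul,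
        add_comm]
    have hdet : (gram (fun i : Fin T => φ (x (i.1 + 1)))
          + σ ^ 2 • (1 : Matrix (Fin T) (Fin T) ℝ)).det
        = ∏ t ∈ Finset.range T, (σ ^ 2 + s2 t) :=
      det_M_prod hσ (fun n => φ (x (n + 1))) T
    rw [hmat, Matrix.det_smul, hdet, Fintype.card_fin]
    rw [show ((σ ^ 2)⁻¹ : ℝ) ^ T = ∏ _t ∈ Finset.range T, ((σ ^ 2)⁻¹ : ℝ) by
      rw [Finset.prod_const, Finset.card_range]]
    rw [← Finset.prod_mul_distrib]
    refine Finset.prod_congr rfl fun t _ => ?_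
    rw [mul_add, inv_mul_cancel₀ (by positivity : (σ^2:ℝ) ≠ 0)]
  -- log of determinant
  have hlog : Real.log ((1 : Matrix (Fin T) (Fin T) ℝ)
        + (σ ^ 2)⁻¹ • gram (fun i : Fin T => φ (x (i.1 + 1)))).det
      = ∑ t ∈ Finset.range T, Real.log (1 + (σ ^ 2)⁻¹ * s2 t) := by
    rw [hprod, Real.log_prod]
    intro t _
    have := hs2nn t
    positivity
  -- sum of variances bound
  have hsum2 : ∑ t ∈ Finset.range T, s2 t
      ≤ (1 / Real.log (1 + (σ ^ 2)⁻¹)) * Real.log ((1 : Matrix (Fin T) (Fin T) ℝ)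
          + (σ ^ 2)⁻¹ • gram (fun i : Fin T => φ (x (i.1 + 1)))).det := by
    rw [hlog, Finset.mul_sum]
    refine Finset.sum_le_sum fun t _ => ?_
    have h := log_ineq hσ2 (hs2nn t) (hs2le t)
    rw [one_div, ← div_eq_inv_mul, le_div_iff₀ hL0]
    linarith
  -- Cauchy-Schwarz
  have hCS : (∑ t ∈ Finset.range T, Real.sqrt (s2 t)) ^ 2
      ≤ (T : ℝ) * ∑ t ∈ Finset.range T, s2 t := by
    have h := Finset.sum_mul_sq_le_sq_mul_sq (Finset.range T) (fun _ => (1:ℝ))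
      (fun t => Real.sqrt (s2 t))
    simp only [one_mul, one_pow, Finset.sum_const, Finset.card_range, nsmul_eq_mul,
      mul_one] at h
    calc (∑ t ∈ Finset.range T, Real.sqrt (s2 t)) ^ 2
        ≤ (T : ℝ) * ∑ t ∈ Finset.range T, Real.sqrt (s2 t) ^ 2 := h
      _ = (T : ℝ) * ∑ t ∈ Finset.range T, s2 t := by
          congr 1
          exact Finset.sum_congr rfl fun t _ => Real.sq_sqrt (hs2nn t)
  -- assemble
  set G := Real.log ((1 : Matrix (Fin T) (Fin T) ℝ)
      + (σ ^ 2)⁻¹ • gram (fun i : Fin T => φ (x (i.1 + 1)))).det with hG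
  set L := Real.log (1 + (σ ^ 2)⁻¹) with hLdef
  have hsqsum : ∑ t ∈ Finset.range T, Real.sqrt (s2 t)
      ≤ Real.sqrt ((T : ℝ) * ((1 / L) * G)) := by
    apply Real.le_sqrt_of_sq_le
    calc (∑ t ∈ Finset.range T, Real.sqrt (s2 t)) ^ 2
        ≤ (T : ℝ) * ∑ t ∈ Finset.range T, s2 t := hCS
      _ ≤ (T : ℝ) * ((1 / L) * G) := by
          apply mul_le_mul_of_nonneg_left hsum2 (Nat.cast_nonneg T)
  calc ∑ t ∈ Finset.range T, (⟪w, φ xstar⟫ - ⟪w, φ (x (t + 1))⟫)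
      ≤ ∑ t ∈ Finset.range T, 2 * ‖w - w'‖ * Real.sqrt (s2 t) :=
        Finset.sum_le_sum fun t ht => key t (Finset.mem_range.mp ht)
    _ = 2 * ‖w - w'‖ * ∑ t ∈ Finset.range T, Real.sqrt (s2 t) := by
        rw [Finset.mul_sum]
    _ ≤ 2 * ‖w - w'‖ * Real.sqrt ((T : ℝ) * ((1 / L) * G)) := by
        apply mul_le_mul_of_nonneg_left hsqsum (by positivity)
    _ = ‖w - w'‖ * Real.sqrt ((8 / L) * T * (1 / 2 * G)) := by
        rw [show (8 / L) * (T:ℝ) * (1 / 2 * G) = 2 ^ 2 * ((T : ℝ) * ((1 / L) * G)) by ring]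
        rw [Real.sqrt_mul (by norm_num : (0:ℝ) ≤ 2 ^ 2), Real.sqrt_sq (by norm_num : (0:ℝ) ≤ 2)]
        ring
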